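/- Let M be a rank-r elementary split matroid with non-redundant representation by hyperedges H_1, …, H_q and bounds r_1, …, r_q. If F ⊆ S has |F| = r and |F ∩ H_i| = r_i for some index i, then F is a basis of M. -/

import Mathlib

/-- In a rank-`r` elementary split matroid with a non-redundant representation, a set `F` of
size `r` that is `Hᵢ`-tight for some `i` is a basis. -/
theorem tight_set_is_basis {α : Type*} (M : Matroid α) (hfin : M.E.Finite)
    (r q : ℕ) (H : Fin q → Set α) (rr : Fin q → ℕ)
    (hHS : ∀ i, H i ⊆ M.E)
    (h1 : ∀ i j : Fin q, i < j → (H i ∩ H j).ncard + r ≤ rr i + rr j)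
    (h2 : ∀ i : Fin q, r ≤ (M.E \ H i).ncard + rr i)
    (h3 : ∀ i : Fin q, rr i + 1 ≤ r)
    (h4 : ∀ i : Fin q, rr i + 1 ≤ (H i).ncard)
    (hInd : ∀ X : Set α, M.Indep X ↔ X ⊆ M.E ∧ X.ncard ≤ r ∧ ∀ i, (X ∩ H i).ncard ≤ rr i)
    (F : Set α) (hF : F ⊆ M.E) (hFcard : F.ncard = r)
    (i : Fin q) (htight : (F ∩ H i).ncard = rr i) :
    M.IsBase F := by
  have hFfin : F.Finite := hfin.subset hF
  -- key: for any j, (F ∩ H j).ncard ≤ rr j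
  have key : ∀ j, (F ∩ H j).ncard ≤ rr j := by
    intro j
    by_contra hlt
    push_neg at hlt
    have hij : i ≠ j := by rintro rfl; omega
    have h1' : (H i ∩ H j).ncard + r ≤ rr i + rr j := by
      rcases lt_or_gt_of_ne hij with h | h
      · exact h1 i j h
      · have := h1 j i h
        rw [Set.inter_comm] at this; omega
    -- inclusion-exclusion within F
    have hsub1 : (F ∩ H i) ∪ (F ∩ H j) ⊆ F := by
      rw [← Set.inter_union_distrib_left]; exact Set.inter_subset_left
    have hsub2 : (F ∩ H i) ∩ (F ∩ H j) ⊆ H i ∩ H j := by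
      intro x hx
      exact ⟨hx.1.2, hx.2.2⟩
    have hie : (F ∩ H i).ncard + (F ∩ H j).ncard
        = ((F ∩ H i) ∪ (F ∩ H j)).ncard + ((F ∩ H i) ∩ (F ∩ H j)).ncard := by
      exact (Set.ncard_union_add_ncard_inter _ _ (hFfin.inter_of_left _)
        (hFfin.inter_of_left _)).symm
    have hle1 : ((F ∩ H i) ∪ (F ∩ H j)).ncard ≤ r := by
      rw [← hFcard]; exact Set.ncard_le_ncard hsub1 hFfin
    have hle2 : ((F ∩ H i) ∩ (F ∩ H j)).ncard ≤ (H i ∩ H j).ncard := by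
      refine Set.ncard_le_ncard hsub2 ?_
      exact ((hfin.subset (hHS i)).inter_of_left _)
    omega
  have hFind : M.Indep F := (hInd F).2 ⟨hF, by omega, key⟩
  refine hFind.isBase_of_forall_insert ?_
  rintro e ⟨heE, heF⟩ hcon
  have := ((hInd _).1 hcon).2.1
  rw [Set.ncard_insert_of_notMem heF hFfin] at this
  omega
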